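/- Let A_1, …, A_r be connected graphs such that for all i ≠ j the graph A_i is not embeddable into A_j (in particular, they are pairwise non-isomorphic). Let S and T be nonempty subsets of {1, …, r} with S not a subset of T. Then the complement of the disjoint union ⨆_{i∈S} A_i is not embeddable into the complement of the disjoint union ⨆_{i∈T} A_i. -/

import Mathlib

namespace PaperFO

/-- The disjoint union of an indexed family of graphs. -/
def sigmaGraph {ι : Type} {Vv : ι → Type} (A : ∀ a : ι, SimpleGraph (Vv a)) :
    SimpleGraph (Σ a : ι, Vv a) where
  Adj p q := ∃ h : p.1 = q.1, (A q.1).Adj (h ▸ p.2) q.2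
  symm := by
    constructor
    rintro ⟨a, x⟩ ⟨b, y⟩ ⟨h, hadj⟩
    cases h
    exact ⟨rfl, hadj.symm⟩
  loopless := by
    constructor
    rintro ⟨a, x⟩ ⟨h, hadj⟩
    exact (A a).irrefl hadj

/-- `Gcon A S` is the complement of the vertex-disjoint union of the graphs
`A a` for `a ∈ S` (the graph `G_{i,S}` of the paper). -/
def Gcon {ι : Type} {Vv : ι → Type} (A : ∀ a : ι, SimpleGraph (Vv a)) (S : Set ι) :
    SimpleGraph {p : Σ a : ι, Vv a | p.1 ∈ S} :=
  ((sigmaGraph A).induce {p : Σ a : ι, Vv a | p.1 ∈ S})ᶜ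

end PaperFO

namespace PaperFO

private lemma sigma_adj_mk {ι : Type} {Vv : ι → Type} (A : ∀ a : ι, SimpleGraph (Vv a))
    (a : ι) (x y : Vv a) :
    (sigmaGraph A).Adj ⟨a, x⟩ ⟨a, y⟩ ↔ (A a).Adj x y := by
  constructor
  · rintro ⟨h, hadj⟩
    have : h = rfl := Subsingleton.elim _ _
    subst this
    exact hadj
  · intro h; exact ⟨rfl, h⟩

private lemma sigma_eq_of {α : Type} {V : α → Type} (p : Σ a, V a) {c : α} (h : p.1 = c) :
    p = ⟨c, h ▸ p.2⟩ := by
  cases p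
  subst h
  rfl

theorem statement_7 {r : ℕ} {Vv : Fin r → Type} [∀ a, Fintype (Vv a)]
    [∀ a, Nonempty (Vv a)] (A : ∀ a, SimpleGraph (Vv a))
    (hconn : ∀ a, (A a).Connected)
    (hemb : ∀ a b : Fin r, a ≠ b → ¬ Nonempty (A a ↪g A b))
    (S T : Finset (Fin r)) (hS : S.Nonempty) (hT : T.Nonempty) (hST : ¬ S ⊆ T) :
    ¬ Nonempty (Gcon A (S : Set (Fin r)) ↪g Gcon A (T : Set (Fin r))) := by
  rintro ⟨f⟩
  obtain ⟨i, hiS, hiT⟩ : ∃ i, i ∈ S ∧ i ∉ T := by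
    by_contra h
    push_neg at h
    exact hST h
  have hmem : ∀ x : Vv i, ((⟨i, x⟩ : Σ a, Vv a)).1 ∈ (S : Set (Fin r)) := by
    intro x; simpa using hiS
  set vert : Vv i → {p : Σ a : Fin r, Vv a | p.1 ∈ (S : Set (Fin r))} :=
    fun x => ⟨⟨i, x⟩, hmem x⟩ with hvert
  have vert_inj : ∀ {x y : Vv i}, x ≠ y → vert x ≠ vert y := by
    intro x y hxy h
    apply hxy
    have := congrArg Subtype.val h
    simpa [hvert] using this
  set φ : Vv i → Σ a : Fin r, Vv a := fun x => (f (vert x)).1 with hφdef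
  -- an embedding of complements transfers adjacency of the underlying graphs
  have key : ∀ u v : {p : Σ a : Fin r, Vv a | p.1 ∈ (S : Set (Fin r))}, u ≠ v →
      ((sigmaGraph A).Adj u.1 v.1 ↔ (sigmaGraph A).Adj (f u).1 (f v).1) := by
    intro u v huv
    have h1 := f.map_adj_iff (v := u) (w := v)
    have hfne : f u ≠ f v := fun h => huv (f.injective h)
    simp only [Gcon, SimpleGraph.compl_adj, SimpleGraph.induce, SimpleGraph.comap_adj,
      Function.Embedding.coe_subtype] at h1
    constructor
    · intro h
      by_contra hc
      exact (h1.mp ⟨hfne, fun h' => hc h'⟩).2 h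
    · intro h
      by_contra hc
      exact (h1.mpr ⟨huv, fun h' => hc h'⟩).2 h
  -- adjacent vertices of `A i` are mapped into the same summand, adjacently
  have claim1 : ∀ x y : Vv i, (A i).Adj x y → (sigmaGraph A).Adj (φ x) (φ y) := by
    intro x y hxy
    exact (key _ _ (vert_inj hxy.ne)).mp ((sigma_adj_mk A i x y).mpr hxy)
  -- all vertices of `A i` land in the same summand
  have claim2 : ∀ x y : Vv i, (φ x).1 = (φ y).1 := by
    have step : ∀ x y : Vv i, (A i).Reachable x y → (φ x).1 = (φ y).1 := by
      intro x y hr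
      obtain ⟨w⟩ := hr
      induction w with
      | nil => rfl
      | cons hadj _ ih =>
        obtain ⟨he, -⟩ := claim1 _ _ hadj
        exact he.trans ih
    exact fun x y => step x y ((hconn i).preconnected x y)
  obtain ⟨x0⟩ := ‹∀ a, Nonempty (Vv a)› i
  set j : Fin r := (φ x0).1 with hjdef
  have hjT : j ∈ T := by
    have h2 := (f (vert x0)).2
    simp only [Set.mem_setOf_eq, Finset.mem_coe] at h2
    exact h2
  have hij : i ≠ j := fun h => hiT (h ▸ hjT)
  have hidx : ∀ x : Vv i, (φ x).1 = j := fun x => claim2 x x0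
  set g : Vv i → Vv j := fun x => (hidx x) ▸ (φ x).2 with hgdef
  have hφ : ∀ x : Vv i, φ x = ⟨j, g x⟩ := fun x => sigma_eq_of (φ x) (hidx x)
  -- adjacency is transferred to `A j`
  have adjiff : ∀ x y : Vv i, (A j).Adj (g x) (g y) ↔ (A i).Adj x y := by
    intro x y
    constructor
    · intro hadj
      have hxy : x ≠ y := by
        rintro rfl
        exact (A j).irrefl hadj
      have hsig : (sigmaGraph A).Adj (φ x) (φ y) := by
        rw [hφ x, hφ y]
        exact (sigma_adj_mk A j (g x) (g y)).mpr hadj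
      have := (key _ _ (vert_inj hxy)).mpr hsig
      exact (sigma_adj_mk A i x y).mp this
    · intro hxy
      have := claim1 x y hxy
      rw [hφ x, hφ y] at this
      exact (sigma_adj_mk A j (g x) (g y)).mp this
  have ginj : Function.Injective g := by
    intro x y h
    have hφeq : φ x = φ y := by rw [hφ x, hφ y, h]
    have : f (vert x) = f (vert y) := Subtype.ext hφeq
    have hv := f.injective this
    by_contra hxy
    exact vert_inj hxy hv
  exact hemb i j hij ⟨⟨⟨g, ginj⟩, fun {x y} => adjiff x y⟩⟩

end PaperFO
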